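/- Let m ≥ 2, n = m + 1, and q ∈ ℝ with q ≠ 0, and write 𝟙 = (1, …, 1) ∈ ℝ^m. The Fréchet derivative of the vector field v at the point q·(𝟙, 0) is the linear endomorphism L of ℝ^m × ℝ^m given by L(ŷ, p̂) = (p̂, n q·p̂ + q²·(Σ_k ŷ_k)·𝟙 − (n − 1)·q²·ŷ). Moreover, L is diagonalizable with eigenvalues 0, n q, (n − 1)q, and q, of multiplicities 1, 1, n − 2, and n − 2 respectively; for λ ∈ {0, n q} the eigenspace of λ is {(c·𝟙, λ·c·𝟙) : c ∈ ℝ}, and for λ ∈ {(n − 1)q, q} the eigenspace of λ is {(ŷ, λ·ŷ) : ŷ ∈ ℝ^m, Σ_k ŷ_k = 0}. -/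

import Mathlib

/-- At the zero `q·(𝟙, 0)` (with `q ≠ 0`, `n = m + 1 ≥ 3`) of the
vector field `v` of the first-order system, the Fréchet derivative of `v` is
`L(ŷ, p̂) = (p̂, n q·p̂ + q²·(Σ ŷₖ)·𝟙 − (n−1)·q²·ŷ)`; it is diagonalizable with
eigenvalues `0, nq, (n−1)q, q` of multiplicities `1, 1, n−2, n−2`, with the
stated eigenspaces. -/
theorem stmt_12 (m n : ℕ) (hm : 2 ≤ m) (hn : n = m + 1) (q : ℝ) (hq : q ≠ 0)
    (v : (Fin m → ℝ) × (Fin m → ℝ) → (Fin m → ℝ) × (Fin m → ℝ))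
    (hv : ∀ yp : (Fin m → ℝ) × (Fin m → ℝ), v yp = (yp.2, fun j =>
      ((∑ k, yp.1 k) + yp.1 j) * yp.2 j + (∑ k, (yp.1 k) ^ 2) * yp.1 j
        - (∑ k, yp.1 k) * (yp.1 j) ^ 2))
    (z : (Fin m → ℝ) × (Fin m → ℝ))
    (hz : z = ((fun _ => q), (fun _ => 0))) :
    (∀ u : (Fin m → ℝ) × (Fin m → ℝ),
      fderiv ℝ v z u = (u.2, fun j =>
        (n : ℝ) * q * u.2 j + q ^ 2 * (∑ k, u.1 k) - ((n : ℝ) - 1) * q ^ 2 * u.1 j)) ∧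
    (⨆ μ ∈ ({0, (n : ℝ) * q, ((n : ℝ) - 1) * q, q} : Set ℝ),
        Module.End.eigenspace (fderiv ℝ v z).toLinearMap μ) = ⊤ ∧
    Module.finrank ℝ (Module.End.eigenspace (fderiv ℝ v z).toLinearMap 0) = 1 ∧
    Module.finrank ℝ (Module.End.eigenspace (fderiv ℝ v z).toLinearMap ((n : ℝ) * q)) = 1 ∧
    Module.finrank ℝ
      (Module.End.eigenspace (fderiv ℝ v z).toLinearMap (((n : ℝ) - 1) * q)) = n - 2 ∧
    Module.finrank ℝ (Module.End.eigenspace (fderiv ℝ v z).toLinearMap q) = n - 2 ∧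
    (∀ μ : ℝ, μ = 0 ∨ μ = (n : ℝ) * q →
      ∀ u : (Fin m → ℝ) × (Fin m → ℝ),
        u ∈ Module.End.eigenspace (fderiv ℝ v z).toLinearMap μ ↔
          ∃ c : ℝ, u = ((fun _ => c), (fun _ => μ * c))) ∧
    (∀ μ : ℝ, μ = ((n : ℝ) - 1) * q ∨ μ = q →
      ∀ u : (Fin m → ℝ) × (Fin m → ℝ),
        u ∈ Module.End.eigenspace (fderiv ℝ v z).toLinearMap μ ↔
          (∑ k, u.1 k) = 0 ∧ u.2 = μ • u.1) := by
  have hveq : v = fun yp => (yp.2, fun j =>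
      ((∑ k, yp.1 k) + yp.1 j) * yp.2 j + (∑ k, (yp.1 k) ^ 2) * yp.1 j
        - (∑ k, yp.1 k) * (yp.1 j) ^ 2) := funext hv
  subst hveq hz hn
  clear hv
  set z : (Fin m → ℝ) × (Fin m → ℝ) := ((fun _ => q), (fun _ => 0)) with hz
  have hm0 : (m : ℝ) ≠ 0 := by positivity
  have hm2 : (2:ℝ) ≤ (m:ℝ) := by exact_mod_cast hm
  have hm1 : (m : ℝ) - 1 ≠ 0 := by linarith
  have hmp1 : (m : ℝ) + 1 ≠ 0 := by positivity
  -- derivatives of coordinate functions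
  have hy : ∀ j, HasFDerivAt (fun yp : (Fin m → ℝ) × (Fin m → ℝ) => yp.1 j)
      ((ContinuousLinearMap.proj j).comp (ContinuousLinearMap.fst ℝ (Fin m → ℝ) (Fin m → ℝ))) z :=
    fun j => (hasFDerivAt_apply (𝕜 := ℝ) j z.1).comp z (hasFDerivAt_fst (𝕜 := ℝ) (p := z))
  have hp : ∀ j, HasFDerivAt (fun yp : (Fin m → ℝ) × (Fin m → ℝ) => yp.2 j)
      ((ContinuousLinearMap.proj j).comp (ContinuousLinearMap.snd ℝ (Fin m → ℝ) (Fin m → ℝ))) z :=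
    fun j => (hasFDerivAt_apply (𝕜 := ℝ) j z.2).comp z (hasFDerivAt_snd (𝕜 := ℝ) (p := z))
  have hS : HasFDerivAt (fun yp : (Fin m → ℝ) × (Fin m → ℝ) => ∑ k, yp.1 k)
      (∑ k, (ContinuousLinearMap.proj k).comp (ContinuousLinearMap.fst ℝ (Fin m → ℝ) (Fin m → ℝ))) z :=
    HasFDerivAt.fun_sum fun k _ => hy k
  have hsq : ∀ k, HasFDerivAt (fun yp : (Fin m → ℝ) × (Fin m → ℝ) => yp.1 k ^ 2)
      ((2 * q) • ((ContinuousLinearMap.proj k).comp (ContinuousLinearMap.fst ℝ (Fin m → ℝ) (Fin m → ℝ)))) z := by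
    intro k
    have heq : (fun yp : (Fin m → ℝ) × (Fin m → ℝ) => yp.1 k ^ 2)
        = (fun yp : (Fin m → ℝ) × (Fin m → ℝ) => yp.1 k * yp.1 k) := by
      funext yp; ring
    rw [heq]
    exact ((hy k).mul (hy k)).congr_fderiv
      (ContinuousLinearMap.ext fun u => by simp [hz]; ring)
  have hQ : HasFDerivAt (fun yp : (Fin m → ℝ) × (Fin m → ℝ) => ∑ k, yp.1 k ^ 2)
      (∑ k, (2 * q) • ((ContinuousLinearMap.proj k).comp (ContinuousLinearMap.fst ℝ (Fin m → ℝ) (Fin m → ℝ)))) z :=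
    HasFDerivAt.fun_sum fun k _ => hsq k
  have hgj : ∀ j, HasFDerivAt
      (fun yp : (Fin m → ℝ) × (Fin m → ℝ) => ((∑ k, yp.1 k) + yp.1 j) * yp.2 j + (∑ k, yp.1 k ^ 2) * yp.1 j
        - (∑ k, yp.1 k) * yp.1 j ^ 2)
      ((((m:ℝ)+1) * q) • ((ContinuousLinearMap.proj j).comp (ContinuousLinearMap.snd ℝ (Fin m → ℝ) (Fin m → ℝ)))
        + (q ^ 2) • (∑ k, (ContinuousLinearMap.proj k).comp (ContinuousLinearMap.fst ℝ (Fin m → ℝ) (Fin m → ℝ)))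
        - ((m:ℝ) * q ^ 2) • ((ContinuousLinearMap.proj j).comp (ContinuousLinearMap.fst ℝ (Fin m → ℝ) (Fin m → ℝ)))) z :=
    fun j =>
    ((((hS.add (hy j)).mul (hp j)).add (hQ.mul (hy j))).sub (hS.mul (hsq j))).congr_fderiv
      (ContinuousLinearMap.ext fun u => by
        simp [hz, ContinuousLinearMap.sum_apply, Finset.sum_const, ← Finset.mul_sum]
        ring)
  set L : (Fin m → ℝ) × (Fin m → ℝ) →L[ℝ] (Fin m → ℝ) × (Fin m → ℝ) :=
      (ContinuousLinearMap.snd ℝ (Fin m → ℝ) (Fin m → ℝ)).prod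
      (ContinuousLinearMap.pi fun j =>
        (((m:ℝ)+1) * q) • ((ContinuousLinearMap.proj j).comp (ContinuousLinearMap.snd ℝ (Fin m → ℝ) (Fin m → ℝ)))
        + (q ^ 2) • (∑ k, (ContinuousLinearMap.proj k).comp (ContinuousLinearMap.fst ℝ (Fin m → ℝ) (Fin m → ℝ)))
        - ((m:ℝ) * q ^ 2) • ((ContinuousLinearMap.proj j).comp (ContinuousLinearMap.fst ℝ (Fin m → ℝ) (Fin m → ℝ)))) with hLdef
  have hL : HasFDerivAt (fun yp : (Fin m → ℝ) × (Fin m → ℝ) => (yp.2, fun j =>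
      ((∑ k, yp.1 k) + yp.1 j) * yp.2 j + (∑ k, (yp.1 k) ^ 2) * yp.1 j
        - (∑ k, yp.1 k) * (yp.1 j) ^ 2)) L z :=
    (hasFDerivAt_snd (𝕜 := ℝ) (p := z)).prodMk (hasFDerivAt_pi.2 hgj)
  have hfd := hL.fderiv
  rw [hfd]
  -- evaluation of L
  have hA : ∀ u : (Fin m → ℝ) × (Fin m → ℝ), L u = (u.2, fun j =>
      ((m:ℝ)+1) * q * u.2 j + q ^ 2 * (∑ k, u.1 k) - (m:ℝ) * q ^ 2 * u.1 j) := by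
    intro u
    refine Prod.ext rfl ?_
    funext j
    show (((m:ℝ)+1) * q) • ((ContinuousLinearMap.proj j).comp (ContinuousLinearMap.snd ℝ (Fin m → ℝ) (Fin m → ℝ))) u
        + (q ^ 2) • (∑ k, (ContinuousLinearMap.proj k).comp (ContinuousLinearMap.fst ℝ (Fin m → ℝ) (Fin m → ℝ))) u
        - ((m:ℝ) * q ^ 2) • ((ContinuousLinearMap.proj j).comp (ContinuousLinearMap.fst ℝ (Fin m → ℝ) (Fin m → ℝ))) u = _
    simp [ContinuousLinearMap.sum_apply, ← Finset.mul_sum]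
  -- eigenspace membership
  have hmem : ∀ (μ : ℝ) (u : (Fin m → ℝ) × (Fin m → ℝ)),
      u ∈ Module.End.eigenspace L.toLinearMap μ ↔
      (u.2 = μ • u.1 ∧ ∀ j, ((m:ℝ)+1) * q * (μ * u.1 j) + q ^ 2 * (∑ k, u.1 k)
        - (m:ℝ) * q ^ 2 * u.1 j = μ * (μ * u.1 j)) := by
    intro μ u
    rw [Module.End.mem_eigenspace_iff]
    have hLu : L.toLinearMap u = L u := rfl
    rw [hLu, hA u, Prod.ext_iff]
    constructor
    · rintro ⟨h1, h2⟩
      simp only [Prod.smul_fst, Prod.smul_snd] at h1 h2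
      refine ⟨h1, fun j => ?_⟩
      have h2j := congrFun h2 j
      simp only [Pi.smul_apply, smul_eq_mul] at h2j
      have h1j := congrFun h1 j
      simp only [Pi.smul_apply, smul_eq_mul] at h1j
      rw [h1j] at h2j
      linear_combination h2j
    · rintro ⟨h1, h2⟩
      refine ⟨by simpa using h1, ?_⟩
      simp only [Prod.smul_snd]
      refine funext fun j => ?_
      have h1j := congrFun h1 j
      simp only [Pi.smul_apply, smul_eq_mul] at h1j ⊢
      rw [h1j]
      linear_combination h2 j
  -- characterization 1 (eigenvalues 0 and (m+1)q)
  have hchar1 : ∀ μ : ℝ, μ * μ = ((m:ℝ)+1) * q * μ →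
      ∀ u : (Fin m → ℝ) × (Fin m → ℝ), u ∈ Module.End.eigenspace L.toLinearMap μ ↔
        ∃ c : ℝ, u = ((fun _ => c), (fun _ => μ * c)) := by
    intro μ hμ u
    rw [hmem]
    constructor
    · rintro ⟨h1, h2⟩
      refine ⟨(∑ k, u.1 k) / m, ?_⟩
      have hq2 : q ^ 2 ≠ 0 := pow_ne_zero 2 hq
      have key : ∀ j, u.1 j = (∑ k, u.1 k) / m := by
        intro j
        have e : q ^ 2 * ((m:ℝ) * u.1 j) = q ^ 2 * ∑ k, u.1 k := by
          linear_combination (-1) * h2 j - u.1 j * hμ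
        have e2 : (m:ℝ) * u.1 j = ∑ k, u.1 k := mul_left_cancel₀ hq2 e
        rw [eq_div_iff hm0]
        linarith
      refine Prod.ext ?_ ?_
      · funext j; exact key j
      · funext j
        have h1j := congrFun h1 j
        simp only [Pi.smul_apply, smul_eq_mul] at h1j
        rw [h1j, key j]
    · rintro ⟨c, rfl⟩
      constructor
      · funext j; simp
      · intro j
        simp only [Finset.sum_const, Finset.card_fin, nsmul_eq_mul]
        linear_combination (-c) * hμ
  -- characterization 2 (eigenvalues mq and q)
  have hchar2 : ∀ μ : ℝ, μ * μ - ((m:ℝ)+1) * q * μ + (m:ℝ) * q ^ 2 = 0 →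
      ∀ u : (Fin m → ℝ) × (Fin m → ℝ), u ∈ Module.End.eigenspace L.toLinearMap μ ↔
        (∑ k, u.1 k) = 0 ∧ u.2 = μ • u.1 := by
    intro μ hμ u
    rw [hmem]
    constructor
    · rintro ⟨h1, h2⟩
      refine ⟨?_, h1⟩
      have j0 : Fin m := ⟨0, by omega⟩
      have e : q ^ 2 * ∑ k, u.1 k = 0 := by
        linear_combination h2 j0 + u.1 j0 * hμ
      have hq2 : q ^ 2 ≠ 0 := pow_ne_zero 2 hq
      exact (mul_eq_zero.1 e).resolve_left hq2
    · rintro ⟨hs, h1⟩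
      refine ⟨h1, fun j => ?_⟩
      rw [hs]
      linear_combination (-(u.1 j)) * hμ
  -- quadratic facts for the four eigenvalues
  have hq1a : (0:ℝ) * 0 = ((m:ℝ)+1) * q * 0 := by ring
  have hq1b : (((m+1 : ℕ)):ℝ) * q * ((((m+1 : ℕ)):ℝ) * q)
      = ((m:ℝ)+1) * q * ((((m+1 : ℕ)):ℝ) * q) := by push_cast; ring
  have hq2a : (((((m+1 : ℕ)):ℝ) - 1) * q) * (((((m+1 : ℕ)):ℝ) - 1) * q)
      - ((m:ℝ)+1) * q * (((((m+1 : ℕ)):ℝ) - 1) * q) + (m:ℝ) * q ^ 2 = 0 := by push_cast; ring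
  have hq2b : q * q - ((m:ℝ)+1) * q * q + (m:ℝ) * q ^ 2 = 0 := by ring
  -- rank lemma 1
  have hrank1 : ∀ μ : ℝ, μ * μ = ((m:ℝ)+1) * q * μ →
      Module.finrank ℝ (Module.End.eigenspace L.toLinearMap μ) = 1 := by
    intro μ hμ
    have hspan : Module.End.eigenspace L.toLinearMap μ =
        Submodule.span ℝ {(((fun _ => (1:ℝ)), (fun _ => μ)) : (Fin m → ℝ) × (Fin m → ℝ))} := by
      ext u
      rw [hchar1 μ hμ, Submodule.mem_span_singleton]
      constructor
      · rintro ⟨c, rfl⟩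
        refine ⟨c, ?_⟩
        refine Prod.ext ?_ ?_ <;> funext j <;>
          simp [mul_comm]
      · rintro ⟨c, rfl⟩
        refine ⟨c, ?_⟩
        refine Prod.ext ?_ ?_ <;> funext j <;>
          simp [mul_comm]
    rw [hspan]
    refine finrank_span_singleton ?_
    intro h
    have := congrFun (congrArg Prod.fst h) ⟨0, by omega⟩
    simpa using this
  -- rank lemma 2
  have hrank2 : ∀ μ : ℝ, μ * μ - ((m:ℝ)+1) * q * μ + (m:ℝ) * q ^ 2 = 0 →
      Module.finrank ℝ (Module.End.eigenspace L.toLinearMap μ) = m - 1 := by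
    intro μ hμ
    set ℓ : (Fin m → ℝ) →ₗ[ℝ] ℝ := ∑ k, LinearMap.proj k with hℓ
    have hℓap : ∀ y : Fin m → ℝ, ℓ y = ∑ k, y k := by
      intro y; simp [hℓ, LinearMap.sum_apply]
    set φ : (Fin m → ℝ) →ₗ[ℝ] (Fin m → ℝ) × (Fin m → ℝ) :=
      LinearMap.prod LinearMap.id (μ • LinearMap.id) with hφ
    have hφap : ∀ y : Fin m → ℝ, φ y = (y, μ • y) := fun y => rfl
    have hφinj : Function.Injective φ := by
      intro x y hxy
      have := congrArg Prod.fst hxy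
      simpa [hφap] using this
    have hmap : Module.End.eigenspace L.toLinearMap μ = Submodule.map φ (LinearMap.ker ℓ) := by
      ext u
      rw [hchar2 μ hμ, Submodule.mem_map]
      constructor
      · rintro ⟨hs, h1⟩
        refine ⟨u.1, by rw [LinearMap.mem_ker, hℓap]; exact hs, ?_⟩
        rw [hφap]
        exact Prod.ext rfl h1.symm
      · rintro ⟨y, hy1, rfl⟩
        rw [LinearMap.mem_ker, hℓap] at hy1
        rw [hφap]
        exact ⟨hy1, rfl⟩
    rw [hmap]
    rw [← LinearEquiv.finrank_eq (Submodule.equivMapOfInjective φ hφinj (LinearMap.ker ℓ))]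
    have hsurj : Function.Surjective ℓ := by
      intro t
      refine ⟨fun _ => t / m, ?_⟩
      rw [hℓap]
      simp only [Finset.sum_const, Finset.card_fin, nsmul_eq_mul]
      field_simp
    have hrk := LinearMap.finrank_range_add_finrank_ker ℓ
    rw [LinearMap.range_eq_top.2 hsurj, finrank_top] at hrk
    simp only [Module.finrank_self, Module.finrank_pi, Fintype.card_fin] at hrk
    omega
  -- the eigenspaces span everything
  have hsup : (⨆ μ ∈ ({0, (((m+1 : ℕ)):ℝ) * q, ((((m+1 : ℕ)):ℝ) - 1) * q, q} : Set ℝ),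
      Module.End.eigenspace L.toLinearMap μ) = ⊤ := by
    rw [eq_top_iff]
    intro u _
    set S : Set ℝ := {0, (((m+1 : ℕ)):ℝ) * q, ((((m+1 : ℕ)):ℝ) - 1) * q, q} with hSdef
    have hle : ∀ μ ∈ S, Module.End.eigenspace L.toLinearMap μ ≤
        ⨆ μ ∈ S, Module.End.eigenspace L.toLinearMap μ := fun μ hμ =>
      le_iSup₂ (f := fun (μ : ℝ) (_ : μ ∈ S) => Module.End.eigenspace L.toLinearMap μ) μ hμ
    set c : ℝ := (∑ k, u.1 k) / m with hc
    set d : ℝ := (∑ k, u.2 k) / m with hd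
    set b : ℝ := d / (((m:ℝ) + 1) * q) with hb
    set a : ℝ := c - b with ha
    set w : Fin m → ℝ := fun j => u.1 j - c with hw
    set r : Fin m → ℝ := fun j => u.2 j - d with hr
    set w1 : Fin m → ℝ := fun j => (r j - q * w j) / (((m:ℝ) - 1) * q) with hw1
    set w2 : Fin m → ℝ := fun j => w j - w1 j with hw2
    have hsw : ∑ k, w k = 0 := by
      simp only [hw, Finset.sum_sub_distrib, Finset.sum_const, Finset.card_fin, nsmul_eq_mul, hc]
      field_simp
      ring
    have hsr : ∑ k, r k = 0 := by
      simp only [hr, Finset.sum_sub_distrib, Finset.sum_const, Finset.card_fin, nsmul_eq_mul, hd]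
      field_simp
      ring
    have hsw1 : ∑ k, w1 k = 0 := by
      have e : ∑ k, w1 k = ((∑ k, r k) - q * ∑ k, w k) / (((m:ℝ) - 1) * q) := by
        simp only [hw1]
        rw [← Finset.sum_div, Finset.sum_sub_distrib, Finset.mul_sum]
      rw [e, hsr, hsw]
      simp
    have hsw2 : ∑ k, w2 k = 0 := by
      simp only [hw2, Finset.sum_sub_distrib, hsw, hsw1]
      simp
    set μ1 : ℝ := (((m+1 : ℕ)):ℝ) * q with hμ1
    set μ2 : ℝ := ((((m+1 : ℕ)):ℝ) - 1) * q with hμ2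
    set u0 : (Fin m → ℝ) × (Fin m → ℝ) := ((fun _ => a), (fun _ => (0:ℝ) * a)) with hu0
    set u1 : (Fin m → ℝ) × (Fin m → ℝ) := ((fun _ => b), (fun _ => μ1 * b)) with hu1
    set u2 : (Fin m → ℝ) × (Fin m → ℝ) := (w1, μ2 • w1) with hu2
    set u3 : (Fin m → ℝ) × (Fin m → ℝ) := (w2, q • w2) with hu3
    have hmem0 : u0 ∈ Module.End.eigenspace L.toLinearMap 0 :=
      (hchar1 0 hq1a u0).2 ⟨a, rfl⟩
    have hmem1 : u1 ∈ Module.End.eigenspace L.toLinearMap μ1 :=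
      (hchar1 μ1 hq1b u1).2 ⟨b, rfl⟩
    have hmem2 : u2 ∈ Module.End.eigenspace L.toLinearMap μ2 :=
      (hchar2 μ2 hq2a u2).2 ⟨hsw1, rfl⟩
    have hmem3 : u3 ∈ Module.End.eigenspace L.toLinearMap q :=
      (hchar2 q hq2b u3).2 ⟨hsw2, rfl⟩
    have e1 : μ1 * b = d := by
      rw [hμ1, hb]; push_cast; field_simp
    have hdecomp : u = u0 + u1 + u2 + u3 := by
      refine Prod.ext ?_ ?_ <;> funext j <;>
        simp only [hu0, hu1, hu2, hu3, Prod.fst_add, Prod.snd_add, Pi.add_apply,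
          Pi.smul_apply, smul_eq_mul]
      · have hwj : w j = u.1 j - c := rfl
        have hw2j : w2 j = w j - w1 j := rfl
        have haj : a = c - b := rfl
        linear_combination haj + hw2j + hwj
      · have e2 : μ2 * w1 j + q * w2 j = r j := by
          have hw1j : w1 j = (r j - q * w j) / (((m:ℝ) - 1) * q) := rfl
          have hw2j : w2 j = w j - w1 j := rfl
          rw [hw2j, hw1j, hμ2]
          push_cast
          field_simp
          ring
        have hrj : r j = u.2 j - d := rfl
        linear_combination -e1 - e2 - hrj
    rw [hdecomp]
    refine Submodule.add_mem _ (Submodule.add_mem _ (Submodule.add_mem _ ?_ ?_) ?_) ?_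
    · exact hle 0 (by simp [hSdef]) hmem0
    · exact hle μ1 (by simp [hSdef]) hmem1
    · exact hle μ2 (by simp [hSdef]) hmem2
    · exact hle q (by simp [hSdef]) hmem3
  refine ⟨?_, hsup, hrank1 0 hq1a, hrank1 _ hq1b, ?_, ?_, ?_, ?_⟩
  · intro u
    rw [hA u]
    refine Prod.ext rfl ?_
    funext j
    push_cast
    ring
  · rw [hrank2 _ hq2a]; omega
  · rw [hrank2 q hq2b]; omega
  · rintro μ (rfl | rfl) u
    · exact hchar1 0 hq1a u
    · exact hchar1 _ hq1b u
  · rintro μ (rfl | rfl) u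
    · exact hchar2 _ hq2a u
    · exact hchar2 _ hq2b u
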